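/- Let k : Fin n → ℝ, λ : Fin n → ℝ, R : Fin n → ℝ, C : Fin n → ℝ be positive, b, c > 0, and let d be a symmetric 0-1 adjacency matrix with zero diagonal such that Σ_{j ≠ i} d i j = k i. Define Q i i = λ i/(R i * C i) - k i * c / C i and Q i j = - b * d i j / C i for i ≠ j. If k i < λ i / (R i * (c + b)) for all i, then Q i i - Σ_{j ≠ i} |Q i j| > 0 for every i. -/

import Mathlib

/-- Diagonal dominance of Q = BΛ⁻¹ - |A| for the Prisoner's Dilemma network,
under the degree bound k i < λ i / (R i (c + b)). -/
theorem network_Q_diag_dominant (n : ℕ)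
    (k lam R C : Fin n → ℝ) (b c : ℝ)
    (hk : ∀ i, 0 < k i) (hlam : ∀ i, 0 < lam i) (hR : ∀ i, 0 < R i)
    (hC : ∀ i, 0 < C i) (hb : 0 < b) (hc : 0 < c)
    (d : Matrix (Fin n) (Fin n) ℝ)
    (hdsymm : ∀ i j, d i j = d j i)
    (hd01 : ∀ i j, d i j = 0 ∨ d i j = 1)
    (hddiag : ∀ i, d i i = 0)
    (hdeg : ∀ i, ∑ j ∈ Finset.univ.erase i, d i j = k i)
    (Q : Matrix (Fin n) (Fin n) ℝ)
    (hQdiag : ∀ i, Q i i = lam i / (R i * C i) - k i * c / C i)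
    (hQoff : ∀ i j, i ≠ j → Q i j = - (b * d i j / C i))
    (hbound : ∀ i, k i < lam i / (R i * (c + b))) :
    ∀ i : Fin n, 0 < Q i i - ∑ j ∈ Finset.univ.erase i, |Q i j| := by
  intro i
  have hsum : ∑ j ∈ Finset.univ.erase i, |Q i j| = b * k i / C i := by
    have : ∀ j ∈ Finset.univ.erase i, |Q i j| = b / C i * d i j := by
      intro j hj
      have hji : j ≠ i := Finset.ne_of_mem_erase hj
      have hd : 0 ≤ d i j := by rcases hd01 i j with h | h <;> simp [h]
      rw [hQoff i j (Ne.symm hji), abs_neg, abs_of_nonneg (div_nonneg (mul_nonneg hb.le hd) (hC i).le)]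
      ring
    rw [Finset.sum_congr rfl this, ← Finset.mul_sum, hdeg i]
    ring
  rw [hsum, hQdiag i]
  have hCi := hC i
  have hRi := hR i
  have key : k i * (c + b) < lam i / R i := by
    have h := hbound i
    have hcb : 0 < c + b := by linarith
    calc k i * (c + b) < lam i / (R i * (c + b)) * (c + b) :=
          mul_lt_mul_of_pos_right h hcb
      _ = lam i / R i := by field_simp
  have e1 : lam i / (R i * C i) = lam i / R i / C i := by rw [div_div]
  have e2 : k i * c / C i + b * k i / C i = k i * (c + b) / C i := by ring
  have h2 : k i * (c + b) / C i < lam i / R i / C i := (div_lt_div_iff_of_pos_right hCi).2 key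
  linarith
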